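/- Let A be a finite-dimensional involutory Hopf algebra over ℂ with n = dim_ℂ A. Then the contraction of the trace character with the cotrace element equals the dimension of the algebra: χ(Λ) = n. -/

import Mathlib

/-!
STATEMENT 4: For a finite-dimensional involutory Hopf algebra A over ℂ with n = dim_ℂ A,
the contraction of the trace character with the cotrace element equals the dimension:
χ(Λ) = n.
-/

open HopfAlgebra TensorProduct

/-- The trace character of the left regular representation:
`χ(a)` is the trace of the ℂ-linear map `x ↦ a * x`. -/
noncomputable def traceChar (A : Type*) [Ring A] [Algebra ℂ A] : A →ₗ[ℂ] ℂ :=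
  (LinearMap.trace ℂ A) ∘ₗ (LinearMap.mul ℂ A)

/-- The cotrace element `Λ = ∑ᵢ (eⁱ ⊗ id)(Δ eᵢ)` associated to a basis `b`. -/
noncomputable def cotraceElem (A : Type*) [Ring A] [HopfAlgebra ℂ A]
    {ι : Type*} [Fintype ι] (b : Module.Basis ι ℂ A) : A :=
  ∑ i, (TensorProduct.lid ℂ A)
    ((LinearMap.rTensor A (b.coord i)) (Coalgebra.comul (R := ℂ) (b i)))

section Aux

open Coalgebra LinearMap

variable {A : Type*} [Ring A] [HopfAlgebra ℂ A]

lemma my_antipode_one : antipode (R := ℂ) (1 : A) = 1 := by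
  have h := mul_antipode_rTensor_comul_apply (R := ℂ) (1 : A)
  rw [Bialgebra.comul_one, Algebra.TensorProduct.one_def] at h
  simpa using h

lemma repr_sum_counit_smul_left {a : A} {κ : Type*} (r : Repr ℂ a κ) :
    ∑ i ∈ r.index, counit (R := ℂ) (r.right i) • r.left i = a := by
  have h := congrArg (TensorProduct.rid ℂ A) (sum_tmul_counit_eq (R := ℂ) r)
  rw [map_sum] at h
  simp only [rid_tmul, one_smul] at h
  exact h

lemma repr_sum_counit_smul_right {a : A} {κ : Type*} (r : Repr ℂ a κ) :
    ∑ i ∈ r.index, counit (R := ℂ) (r.left i) • r.right i = a := by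
  have h := congrArg (TensorProduct.lid ℂ A) (sum_counit_tmul_eq (R := ℂ) r)
  rw [map_sum] at h
  simp only [lid_tmul, one_smul] at h
  exact h

/-- `∑ S(a₁)a₂ ⊗ a₃ = 1 ⊗ a` -/
lemma A1 {z : A} {κ : Type*} (r : Repr ℂ z κ) {κ2 : κ → Type*} (r2 : ∀ i : κ, Repr ℂ (r.right i) (κ2 i)) :
    ∑ i ∈ r.index, ∑ k ∈ (r2 i).index,
      (antipode (R := ℂ) (r.left i) * (r2 i).left k) ⊗ₜ[ℂ] (r2 i).right k
      = 1 ⊗ₜ[ℂ] z := by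
  classical
  set r1 : ∀ i : κ, Repr ℂ (r.left i) (A × A) := fun i => Repr.arbitrary ℂ (r.left i) with hr1
  have h := sum_tmul_tmul_eq (R := ℂ) r r1 r2
  set Ξ : A ⊗[ℂ] (A ⊗[ℂ] A) →ₗ[ℂ] A ⊗[ℂ] A :=
    (LinearMap.rTensor A ((LinearMap.mul' ℂ A) ∘ₗ (LinearMap.rTensor A (antipode (R := ℂ)))))
      ∘ₗ (TensorProduct.assoc ℂ A A A).symm.toLinearMap with hΞ
  have hΞt : ∀ (x u v : A), Ξ (x ⊗ₜ (u ⊗ₜ v)) = (antipode (R := ℂ) x * u) ⊗ₜ v := by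
    intro x u v
    simp [hΞ]
  have h2 := congrArg Ξ h
  rw [map_sum, map_sum] at h2
  simp only [map_sum, hΞt] at h2
  -- h2 : ∑ i ∑ j (S((r1 i).left j) * (r1 i).right j) ⊗ₜ r.right i = ∑ i ∑ k (S(r.left i) * (r2 i).left k) ⊗ₜ (r2 i).right k
  rw [← h2]
  have : ∀ i ∈ r.index, ∑ j ∈ (r1 i).index,
      (antipode (R := ℂ) ((r1 i).left j) * (r1 i).right j) ⊗ₜ[ℂ] (r.right i)
      = counit (R := ℂ) (r.left i) • ((1 : A) ⊗ₜ[ℂ] r.right i) := by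
    intro i _
    rw [← TensorProduct.sum_tmul, sum_antipode_mul_eq_smul (r1 i), smul_tmul']
  rw [Finset.sum_congr rfl this]
  have := repr_sum_counit_smul_right r
  calc ∑ i ∈ r.index, counit (R := ℂ) (r.left i) • ((1:A) ⊗ₜ[ℂ] r.right i)
      = (1:A) ⊗ₜ[ℂ] (∑ i ∈ r.index, counit (R := ℂ) (r.left i) • r.right i) := by
        rw [TensorProduct.tmul_sum]
        exact Finset.sum_congr rfl fun i _ => by rw [tmul_smul]
    _ = 1 ⊗ₜ[ℂ] z := by rw [this]

lemma my_antipode_mul (a c : A) :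
    antipode (R := ℂ) (a * c) = antipode (R := ℂ) c * antipode (R := ℂ) a := by
  classical
  set Sm : A →ₗ[ℂ] A := antipode (R := ℂ) with hSm
  let ra := Repr.arbitrary ℂ a
  let rc := Repr.arbitrary ℂ c
  let r2a : ∀ i : ra.ι, Repr ℂ (ra.right i) (A × A) := fun i => Repr.arbitrary ℂ _
  let r2c : ∀ j : rc.ι, Repr ℂ (rc.right j) (A × A) := fun j => Repr.arbitrary ℂ _
  set M : A := ∑ j ∈ rc.index, ∑ l ∈ (r2c j).index, ∑ i ∈ ra.index, ∑ k ∈ (r2a i).index,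
      Sm (rc.left j) * Sm (ra.left i) * ((r2a i).left k * (r2c j).left l) *
        Sm ((r2a i).right k * (r2c j).right l) with hM
  have hI : M = Sm (a * c) := by
    have hjl : ∀ j ∈ rc.index, ∀ l ∈ (r2c j).index,
        ∑ i ∈ ra.index, ∑ k ∈ (r2a i).index,
          Sm (rc.left j) * Sm (ra.left i) * ((r2a i).left k * (r2c j).left l) *
            Sm ((r2a i).right k * (r2c j).right l)
        = Sm (rc.left j) * ((r2c j).left l * Sm (a * (r2c j).right l)) := by
      intro j _ l _
      set g₂ : A →ₗ[ℂ] A :=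
        (LinearMap.mulLeft ℂ ((r2c j).left l)) ∘ₗ Sm ∘ₗ (LinearMap.mulRight ℂ ((r2c j).right l))
        with hg₂
      set V : A ⊗[ℂ] A →ₗ[ℂ] A :=
        (LinearMap.mulLeft ℂ (Sm (rc.left j))) ∘ₗ (LinearMap.mul' ℂ A) ∘ₗ
          (LinearMap.lTensor A g₂) with hV
      have hVt : ∀ m₁ m₂ : A, V (m₁ ⊗ₜ[ℂ] m₂)
          = Sm (rc.left j) * (m₁ * ((r2c j).left l * Sm (m₂ * (r2c j).right l))) := by
        intro m₁ m₂; simp [hV, hg₂]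
      have h1 := congrArg V (A1 ra r2a)
      rw [map_sum] at h1
      simp only [map_sum, hVt] at h1
      calc ∑ i ∈ ra.index, ∑ k ∈ (r2a i).index,
            Sm (rc.left j) * Sm (ra.left i) * ((r2a i).left k * (r2c j).left l) *
              Sm ((r2a i).right k * (r2c j).right l)
          = ∑ i ∈ ra.index, ∑ k ∈ (r2a i).index,
            Sm (rc.left j) * ((Sm (ra.left i) * (r2a i).left k) *
              ((r2c j).left l * Sm ((r2a i).right k * (r2c j).right l))) := by
            apply Finset.sum_congr rfl; intro i _; apply Finset.sum_congr rfl; intro k _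
            simp only [mul_assoc]
        _ = Sm (rc.left j) * (1 * ((r2c j).left l * Sm (a * (r2c j).right l))) := by
            rw [h1]
        _ = Sm (rc.left j) * ((r2c j).left l * Sm (a * (r2c j).right l)) := by rw [one_mul]
    rw [hM, Finset.sum_congr rfl (fun j hj => Finset.sum_congr rfl (fun l hl => hjl j hj l hl))]
    set V'' : A ⊗[ℂ] A →ₗ[ℂ] A :=
      (LinearMap.mul' ℂ A) ∘ₗ (LinearMap.lTensor A (Sm ∘ₗ LinearMap.mulLeft ℂ a)) with hV''
    have hVt'' : ∀ m₁ m₂ : A, V'' (m₁ ⊗ₜ[ℂ] m₂) = m₁ * Sm (a * m₂) := by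
      intro m₁ m₂; simp [hV'']
    have h2 := congrArg V'' (A1 rc r2c)
    rw [map_sum] at h2
    simp only [map_sum, hVt''] at h2
    calc ∑ j ∈ rc.index, ∑ l ∈ (r2c j).index,
          Sm (rc.left j) * ((r2c j).left l * Sm (a * (r2c j).right l))
        = ∑ j ∈ rc.index, ∑ l ∈ (r2c j).index,
          (Sm (rc.left j) * (r2c j).left l) * Sm (a * (r2c j).right l) := by
          apply Finset.sum_congr rfl; intro j _; apply Finset.sum_congr rfl; intro l _
          rw [mul_assoc]
      _ = 1 * Sm (a * c) := h2
      _ = Sm (a * c) := one_mul _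
  have hII : M = Sm c * Sm a := by
    have hre : M = ∑ i ∈ ra.index, ∑ j ∈ rc.index, ∑ k ∈ (r2a i).index, ∑ l ∈ (r2c j).index,
        Sm (rc.left j) * Sm (ra.left i) * ((r2a i).left k * (r2c j).left l) *
          Sm ((r2a i).right k * (r2c j).right l) := by
      rw [hM]
      rw [Finset.sum_congr rfl (fun j _ => Finset.sum_comm)]
      rw [Finset.sum_comm]
      apply Finset.sum_congr rfl; intro i _
      rw [Finset.sum_congr rfl (fun j _ => Finset.sum_comm)]
    rw [hre]
    have hij : ∀ i ∈ ra.index, ∀ j ∈ rc.index,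
        ∑ k ∈ (r2a i).index, ∑ l ∈ (r2c j).index,
          Sm (rc.left j) * Sm (ra.left i) * ((r2a i).left k * (r2c j).left l) *
            Sm ((r2a i).right k * (r2c j).right l)
        = (counit (R := ℂ) (ra.right i) * counit (R := ℂ) (rc.right j)) •
            (Sm (rc.left j) * Sm (ra.left i)) := by
      intro i _ j _
      set W : A ⊗[ℂ] A →ₗ[ℂ] A :=
        (LinearMap.mulLeft ℂ (Sm (rc.left j) * Sm (ra.left i))) ∘ₗ (LinearMap.mul' ℂ A) ∘ₗ
          (LinearMap.lTensor A Sm) with hW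
      have hWt : ∀ m₁ m₂ : A, W (m₁ ⊗ₜ[ℂ] m₂)
          = Sm (rc.left j) * Sm (ra.left i) * (m₁ * Sm m₂) := by
        intro m₁ m₂; simp [hW, mul_assoc]
      have hcm : Coalgebra.comul (R := ℂ) (ra.right i * rc.right j)
          = ∑ k ∈ (r2a i).index, ∑ l ∈ (r2c j).index,
              ((r2a i).left k * (r2c j).left l) ⊗ₜ[ℂ] ((r2a i).right k * (r2c j).right l) := by
        rw [Bialgebra.comul_mul, ← (r2a i).eq, ← (r2c j).eq, Finset.sum_mul_sum]
        apply Finset.sum_congr rfl; intro k _; apply Finset.sum_congr rfl; intro l _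
        rw [Algebra.TensorProduct.tmul_mul_tmul]
      have h3 := congrArg W hcm
      rw [map_sum] at h3
      simp only [map_sum, hWt] at h3
      have h4 : W (Coalgebra.comul (R := ℂ) (ra.right i * rc.right j))
          = (counit (R := ℂ) (ra.right i) * counit (R := ℂ) (rc.right j)) •
              (Sm (rc.left j) * Sm (ra.left i)) := by
        rw [hW]
        simp only [LinearMap.comp_apply]
        rw [hSm, mul_antipode_lTensor_comul_apply, LinearMap.mulLeft_apply,
          Bialgebra.counit_mul, Algebra.smul_def]
        exact (Algebra.commutes _ _).symm
      calc ∑ k ∈ (r2a i).index, ∑ l ∈ (r2c j).index,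
            Sm (rc.left j) * Sm (ra.left i) * ((r2a i).left k * (r2c j).left l) *
              Sm ((r2a i).right k * (r2c j).right l)
          = ∑ k ∈ (r2a i).index, ∑ l ∈ (r2c j).index,
            Sm (rc.left j) * Sm (ra.left i) * (((r2a i).left k * (r2c j).left l) *
              Sm ((r2a i).right k * (r2c j).right l)) := by
            apply Finset.sum_congr rfl; intro k _; apply Finset.sum_congr rfl; intro l _
            rw [mul_assoc]
        _ = W (Coalgebra.comul (R := ℂ) (ra.right i * rc.right j)) := h3.symm
        _ = _ := h4
    rw [Finset.sum_congr rfl (fun i hi => Finset.sum_congr rfl (fun j hj => hij i hi j hj))]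
    have hc : ∑ j ∈ rc.index, counit (R := ℂ) (rc.right j) • Sm (rc.left j) = Sm c := by
      conv_rhs => rw [← repr_sum_counit_smul_left rc]
      rw [map_sum]
      exact Finset.sum_congr rfl fun j _ => (map_smul Sm _ _).symm
    have ha : ∑ i ∈ ra.index, counit (R := ℂ) (ra.right i) • Sm (ra.left i) = Sm a := by
      conv_rhs => rw [← repr_sum_counit_smul_left ra]
      rw [map_sum]
      exact Finset.sum_congr rfl fun i _ => (map_smul Sm _ _).symm
    calc ∑ i ∈ ra.index, ∑ j ∈ rc.index,
          (counit (R := ℂ) (ra.right i) * counit (R := ℂ) (rc.right j)) •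
            (Sm (rc.left j) * Sm (ra.left i))
        = ∑ i ∈ ra.index, Sm c * (counit (R := ℂ) (ra.right i) • Sm (ra.left i)) := by
          apply Finset.sum_congr rfl; intro i _
          calc ∑ j ∈ rc.index, (counit (R := ℂ) (ra.right i) * counit (R := ℂ) (rc.right j)) •
                (Sm (rc.left j) * Sm (ra.left i))
              = ∑ j ∈ rc.index, (counit (R := ℂ) (rc.right j) • Sm (rc.left j)) *
                  (counit (R := ℂ) (ra.right i) • Sm (ra.left i)) := by
                apply Finset.sum_congr rfl; intro j _
                rw [smul_mul_smul_comm, mul_comm]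
            _ = Sm c * (counit (R := ℂ) (ra.right i) • Sm (ra.left i)) := by
                rw [← Finset.sum_mul, hc]
      _ = Sm c * Sm a := by rw [← Finset.mul_sum, ha]
  rw [← hI, hII]

/-- Skew collapse: for involutory `S`, `∑ a₂ * S(a₁) = ε(a) • 1`. -/
lemma skew_collapse (hinv : ∀ x : A, antipode (R := ℂ) (antipode (R := ℂ) x) = x)
    {z : A} {κ : Type*} (r : Repr ℂ z κ) :
    ∑ i ∈ r.index, r.right i * antipode (R := ℂ) (r.left i)
      = counit (R := ℂ) z • (1 : A) := by
  have h := congrArg (antipode (R := ℂ)) (sum_mul_antipode_eq_smul (R := ℂ) r)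
  rw [map_sum, map_smul] at h
  calc ∑ i ∈ r.index, r.right i * antipode (R := ℂ) (r.left i)
      = ∑ i ∈ r.index,
          antipode (R := ℂ) (r.left i * antipode (R := ℂ) (r.right i)) := by
        apply Finset.sum_congr rfl; intro i _
        rw [my_antipode_mul, hinv]
    _ = counit (R := ℂ) z • antipode (R := ℂ) (1 : A) := h
    _ = counit (R := ℂ) z • (1 : A) := by rw [my_antipode_one]

/-- `∑ (a₂ * S(a₁)) ⊗ a₃ = 1 ⊗ a` for involutory `S`. -/
lemma B1 (hinv : ∀ x : A, antipode (R := ℂ) (antipode (R := ℂ) x) = x)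
    {z : A} {κ : Type*} (r : Repr ℂ z κ) {κ2 : κ → Type*} (r2 : ∀ i : κ, Repr ℂ (r.right i) (κ2 i)) :
    ∑ i ∈ r.index, ∑ k ∈ (r2 i).index,
      ((r2 i).left k * antipode (R := ℂ) (r.left i)) ⊗ₜ[ℂ] (r2 i).right k
      = 1 ⊗ₜ[ℂ] z := by
  classical
  set r1 : ∀ i : κ, Repr ℂ (r.left i) (A × A) := fun i => Repr.arbitrary ℂ (r.left i) with hr1
  have h := sum_tmul_tmul_eq (R := ℂ) r r1 r2
  set g : A ⊗[ℂ] A →ₗ[ℂ] A :=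
    (LinearMap.mul' ℂ A) ∘ₗ (TensorProduct.comm ℂ A A).toLinearMap ∘ₗ
      (LinearMap.rTensor A (antipode (R := ℂ))) with hg
  set Ξ : A ⊗[ℂ] (A ⊗[ℂ] A) →ₗ[ℂ] A ⊗[ℂ] A :=
    (LinearMap.rTensor A g) ∘ₗ (TensorProduct.assoc ℂ A A A).symm.toLinearMap with hΞ
  have hΞt : ∀ (x u v : A), Ξ (x ⊗ₜ (u ⊗ₜ v)) = (u * antipode (R := ℂ) x) ⊗ₜ v := by
    intro x u v
    simp [hΞ, hg]
  have h2 := congrArg Ξ h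
  rw [map_sum, map_sum] at h2
  simp only [map_sum, hΞt] at h2
  rw [← h2]
  have : ∀ i ∈ r.index, ∑ j ∈ (r1 i).index,
      ((r1 i).right j * antipode (R := ℂ) ((r1 i).left j)) ⊗ₜ[ℂ] (r.right i)
      = counit (R := ℂ) (r.left i) • ((1 : A) ⊗ₜ[ℂ] r.right i) := by
    intro i _
    rw [← TensorProduct.sum_tmul, skew_collapse hinv (r1 i), smul_tmul']
  rw [Finset.sum_congr rfl this]
  have hz := repr_sum_counit_smul_right r
  calc ∑ i ∈ r.index, counit (R := ℂ) (r.left i) • ((1:A) ⊗ₜ[ℂ] r.right i)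
      = (1:A) ⊗ₜ[ℂ] (∑ i ∈ r.index, counit (R := ℂ) (r.left i) • r.right i) := by
        rw [TensorProduct.tmul_sum]
        exact Finset.sum_congr rfl fun i _ => by rw [tmul_smul]
    _ = 1 ⊗ₜ[ℂ] z := by rw [hz]

lemma lid_rTensor_mul_one_tmul (f : A →ₗ[ℂ] ℂ) (a : A) (t : A ⊗[ℂ] A) :
    (TensorProduct.lid ℂ A) (LinearMap.rTensor A f (t * ((1:A) ⊗ₜ[ℂ] a))) =
    (TensorProduct.lid ℂ A) (LinearMap.rTensor A f t) * a := by
  induction t using TensorProduct.induction_on with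
  | zero => simp
  | tmul x y => simp [Algebra.TensorProduct.tmul_mul_tmul, smul_mul_assoc]
  | add u v hu hv => simp only [add_mul, map_add, hu, hv]

lemma lid_rTensor_mul_tmul_one (f : A →ₗ[ℂ] ℂ) (u : A) (t : A ⊗[ℂ] A) :
    (TensorProduct.lid ℂ A) (LinearMap.rTensor A f (t * (u ⊗ₜ[ℂ] (1:A)))) =
    (TensorProduct.lid ℂ A) (LinearMap.rTensor A (f ∘ₗ LinearMap.mulRight ℂ u) t) := by
  induction t using TensorProduct.induction_on with
  | zero => simp
  | tmul x y => simp [Algebra.TensorProduct.tmul_mul_tmul]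
  | add w v hw hv => simp only [add_mul, map_add, hw, hv]

section WithBasis

variable {ι : Type*} [Fintype ι] (b : Module.Basis ι ℂ A)

/-- Auxiliary contraction map `B ↦ ∑ᵢ (eⁱ ⊗ id)(Δ(eᵢ) * B)`. -/
noncomputable def cmB : (A ⊗[ℂ] A) →ₗ[ℂ] A :=
  ∑ i, (TensorProduct.lid ℂ A).toLinearMap ∘ₗ (LinearMap.rTensor A (b.coord i)) ∘ₗ
    (LinearMap.mulLeft ℂ (Coalgebra.comul (R := ℂ) (b i)))

lemma cmB_apply (t : A ⊗[ℂ] A) :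
    cmB b t = ∑ i, (TensorProduct.lid ℂ A)
      (LinearMap.rTensor A (b.coord i) (Coalgebra.comul (R := ℂ) (b i) * t)) := by
  simp [cmB, LinearMap.sum_apply]

lemma cmB_one : cmB b 1 = cotraceElem A b := by
  rw [cmB_apply, cotraceElem]
  exact Finset.sum_congr rfl fun i _ => by rw [mul_one]

lemma cmB_one_tmul (a : A) : cmB b ((1:A) ⊗ₜ[ℂ] a) = cotraceElem A b * a := by
  rw [cmB_apply, cotraceElem, Finset.sum_mul]
  exact Finset.sum_congr rfl fun i _ => lid_rTensor_mul_one_tmul _ _ _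

lemma cmB_key1 (u : A) (B : A ⊗[ℂ] A) :
    cmB b (Coalgebra.comul (R := ℂ) u * B) = cmB b (B * (u ⊗ₜ[ℂ] (1:A))) := by
  classical
  rw [cmB_apply, cmB_apply]
  have hcm : ∀ i : ι, Coalgebra.comul (R := ℂ) (b i) * (Coalgebra.comul (R := ℂ) u * B)
      = ∑ j, b.repr (b i * u) j • (Coalgebra.comul (R := ℂ) (b j) * B) := by
    intro i
    rw [← mul_assoc, ← Bialgebra.comul_mul]
    conv_lhs => rw [← b.sum_repr (b i * u)]
    rw [map_sum, Finset.sum_mul]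
    exact Finset.sum_congr rfl fun j _ => by rw [map_smul, smul_mul_assoc]
  have hcoord : ∀ j : ι, b.coord j ∘ₗ LinearMap.mulRight ℂ u
      = ∑ i, b.repr (b i * u) j • b.coord i := by
    intro j
    apply b.ext; intro k
    simp only [LinearMap.comp_apply, LinearMap.mulRight_apply, Module.Basis.coord_apply,
      LinearMap.sum_apply, LinearMap.smul_apply, Module.Basis.repr_self, smul_eq_mul,
      Finsupp.single_apply]
    rw [Finset.sum_eq_single k]
    · rw [if_pos rfl, mul_one]
    · intro i _ hik; rw [if_neg (Ne.symm hik), mul_zero]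
    · intro h; exact absurd (Finset.mem_univ k) h
  calc ∑ i, (TensorProduct.lid ℂ A)
        (LinearMap.rTensor A (b.coord i) (Coalgebra.comul (R := ℂ) (b i) * (Coalgebra.comul (R := ℂ) u * B)))
      = ∑ i, ∑ j, b.repr (b i * u) j •
          (TensorProduct.lid ℂ A) (LinearMap.rTensor A (b.coord i) (Coalgebra.comul (R := ℂ) (b j) * B)) := by
        apply Finset.sum_congr rfl; intro i _
        rw [hcm i, map_sum, map_sum]
        exact Finset.sum_congr rfl fun j _ => by rw [map_smul, map_smul]
    _ = ∑ j, ∑ i, b.repr (b i * u) j •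
          (TensorProduct.lid ℂ A) (LinearMap.rTensor A (b.coord i) (Coalgebra.comul (R := ℂ) (b j) * B)) :=
        Finset.sum_comm
    _ = ∑ j, (TensorProduct.lid ℂ A)
          (LinearMap.rTensor A (b.coord j) (Coalgebra.comul (R := ℂ) (b j) * B * (u ⊗ₜ[ℂ] 1))) := by
        have hr : ∀ (d : ι → ℂ) (t : A ⊗[ℂ] A),
            LinearMap.rTensor A (∑ i, d i • b.coord i) t
              = ∑ i, d i • LinearMap.rTensor A (b.coord i) t := by
          intro d t
          induction t using TensorProduct.induction_on with
          | zero => simp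
          | tmul x y =>
            simp only [LinearMap.rTensor_tmul, LinearMap.sum_apply, LinearMap.smul_apply,
              TensorProduct.sum_tmul, TensorProduct.smul_tmul']
          | add w v hw hv => simp only [map_add, hw, hv, Finset.sum_add_distrib, smul_add]
        apply Finset.sum_congr rfl; intro j _
        rw [lid_rTensor_mul_tmul_one, hcoord j, hr _ _, map_sum]
        exact Finset.sum_congr rfl fun i _ => by rw [map_smul]
    _ = ∑ j, (TensorProduct.lid ℂ A)
          (LinearMap.rTensor A (b.coord j) (Coalgebra.comul (R := ℂ) (b j) * (B * (u ⊗ₜ[ℂ] 1)))) := by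
        apply Finset.sum_congr rfl; intro j _
        rw [mul_assoc]

lemma cotrace_mul (hinv : ∀ x : A, antipode (R := ℂ) (antipode (R := ℂ) x) = x) (a : A) :
    cotraceElem A b * a = counit (R := ℂ) a • cotraceElem A b := by
  classical
  rw [← cmB_one_tmul]
  let r := Repr.arbitrary ℂ a
  let r2 : ∀ i : r.ι, Repr ℂ (r.right i) (A × A) := fun i => Repr.arbitrary ℂ _
  have hB1 := B1 hinv r r2
  rw [← hB1, map_sum]
  have hstep : ∀ i ∈ r.index,
      cmB b (∑ k ∈ (r2 i).index,
        ((r2 i).left k * antipode (R := ℂ) (r.left i)) ⊗ₜ[ℂ] (r2 i).right k)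
      = cmB b ((antipode (R := ℂ) (r.left i) * r.right i) ⊗ₜ[ℂ] (1:A)) := by
    intro i _
    have h1 : ∑ k ∈ (r2 i).index,
        ((r2 i).left k * antipode (R := ℂ) (r.left i)) ⊗ₜ[ℂ] (r2 i).right k
        = Coalgebra.comul (R := ℂ) (r.right i) * ((antipode (R := ℂ) (r.left i)) ⊗ₜ[ℂ] (1:A)) := by
      rw [← (r2 i).eq, Finset.sum_mul]
      exact Finset.sum_congr rfl fun k _ => by
        rw [Algebra.TensorProduct.tmul_mul_tmul, mul_one]
    rw [h1, cmB_key1]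
    congr 1
    rw [Algebra.TensorProduct.tmul_mul_tmul, one_mul]
  rw [Finset.sum_congr rfl hstep, ← map_sum]
  have h2 : ∑ i ∈ r.index, ((antipode (R := ℂ) (r.left i) * r.right i) ⊗ₜ[ℂ] (1:A))
      = (counit (R := ℂ) a • (1:A)) ⊗ₜ[ℂ] (1:A) := by
    rw [← TensorProduct.sum_tmul, sum_antipode_mul_eq_smul r]
  rw [h2, ← TensorProduct.smul_tmul', map_smul]
  congr 1
  rw [← Algebra.TensorProduct.one_def, cmB_one]

lemma counit_lid_rTensor (f : A →ₗ[ℂ] ℂ) (z : A) :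
    counit (R := ℂ) ((TensorProduct.lid ℂ A)
      (LinearMap.rTensor A f (Coalgebra.comul (R := ℂ) z))) = f z := by
  classical
  let r := Repr.arbitrary ℂ z
  rw [← r.eq, map_sum, map_sum, map_sum]
  have : ∀ i ∈ r.index, counit (R := ℂ)
      ((TensorProduct.lid ℂ A) (LinearMap.rTensor A f (r.left i ⊗ₜ[ℂ] r.right i)))
      = counit (R := ℂ) (r.right i) * f (r.left i) := by
    intro i _
    rw [LinearMap.rTensor_tmul, TensorProduct.lid_tmul, map_smul]
    rw [smul_eq_mul, mul_comm]
  rw [Finset.sum_congr rfl this]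
  conv_rhs => rw [← repr_sum_counit_smul_left r]
  rw [map_sum]
  exact Finset.sum_congr rfl fun i _ => by rw [map_smul, smul_eq_mul]

lemma counit_cotrace : counit (R := ℂ) (cotraceElem A b) = (Fintype.card ι : ℂ) := by
  rw [cotraceElem, map_sum]
  have : ∀ i : ι, counit (R := ℂ) ((TensorProduct.lid ℂ A)
      (LinearMap.rTensor A (b.coord i) (Coalgebra.comul (R := ℂ) (b i)))) = 1 := by
    intro i
    rw [counit_lid_rTensor, Module.Basis.coord_apply, Module.Basis.repr_self, Finsupp.single_eq_same]
  rw [Finset.sum_congr rfl fun i _ => this i]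
  simp

end WithBasis

theorem traceChar_cotrace_eq_dim'
    (A : Type*) [Ring A] [HopfAlgebra ℂ A] [FiniteDimensional ℂ A]
    (hinv : ∀ a : A, antipode (R := ℂ) (antipode (R := ℂ) a) = a)
    {ι : Type*} [Fintype ι] (b : Module.Basis ι ℂ A) :
    traceChar A (cotraceElem A b) = (Module.finrank ℂ A : ℂ) := by
  classical
  have hmul : LinearMap.mul ℂ A (cotraceElem A b)
      = (Coalgebra.counit (R := ℂ) (A := A)).smulRight (cotraceElem A b) := by
    ext x
    rw [LinearMap.smulRight_apply]
    exact cotrace_mul b hinv x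
  have htr : traceChar A (cotraceElem A b)
      = LinearMap.trace ℂ A (LinearMap.mul ℂ A (cotraceElem A b)) := rfl
  rw [htr, hmul, LinearMap.trace_eq_matrix_trace ℂ b, Matrix.trace]
  have hdiag : ∀ i : ι, (LinearMap.toMatrix b b
      ((Coalgebra.counit (R := ℂ) (A := A)).smulRight (cotraceElem A b))).diag i
      = counit (R := ℂ) (b i) * b.repr (cotraceElem A b) i := by
    intro i
    rw [Matrix.diag_apply, LinearMap.toMatrix_apply, LinearMap.smulRight_apply, map_smul]
    rfl
  rw [Finset.sum_congr rfl fun i _ => hdiag i]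
  have : ∑ i : ι, counit (R := ℂ) (b i) * b.repr (cotraceElem A b) i
      = counit (R := ℂ) (cotraceElem A b) := by
    conv_rhs => rw [← b.sum_repr (cotraceElem A b)]
    rw [map_sum]
    exact Finset.sum_congr rfl fun i _ => by rw [map_smul, smul_eq_mul, mul_comm]
  rw [this, counit_cotrace, Module.finrank_eq_card_basis b]

end Aux

theorem traceChar_cotrace_eq_dim
    (A : Type*) [Ring A] [HopfAlgebra ℂ A] [FiniteDimensional ℂ A]
    (hinv : ∀ a : A, antipode (R := ℂ) (antipode (R := ℂ) a) = a)
    {ι : Type*} [Fintype ι] (b : Module.Basis ι ℂ A) :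
    traceChar A (cotraceElem A b) = (Module.finrank ℂ A : ℂ) :=
  traceChar_cotrace_eq_dim' A hinv b
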